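/- Let V be a finite index set and let (A, S, B) be a partition of V with A and B nonempty. Let Σ be a symmetric positive definite real V×V matrix such that the (A,B) block of Σ⁻¹ is zero, i.e. (Σ⁻¹)_{a b} = 0 for all a ∈ A, b ∈ B. Then det Σ = det Σ_{A∪S} · det Σ_{B∪S} / det Σ_S, where Σ_U denotes the principal sub-matrix of Σ indexed by U ⊆ V, with the convention det Σ_∅ = 1. -/

import Mathlib

open Matrix

def psub {V : Type*} [Fintype V] [DecidableEq V] (M : Matrix V V ℝ) (A : Finset V) :
    Matrix A A ℝ :=
  M.submatrix (fun a => a.1) (fun a => a.1)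

section Aux

variable {V : Type*} [Fintype V] [DecidableEq V]

/-- extension of a vector on a finset by zero -/
noncomputable def extz (A : Finset V) (x : A → ℝ) : V → ℝ :=
  fun v => if h : v ∈ A then x ⟨v, h⟩ else 0

lemma sum_extz (A : Finset V) (x : A → ℝ) (g : V → ℝ) :
    ∑ v : V, extz A x v * g v = ∑ a : A, x a * g a.1 := by
  rw [← Finset.sum_subset A.subset_univ (fun v _ hv => by simp [extz, hv])]
  rw [← Finset.sum_attach A (fun v => extz A x v * g v), ← Finset.univ_eq_attach]
  refine Finset.sum_congr rfl fun a _ => ?_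
  simp [extz, a.2]

lemma psub_posDef {M : Matrix V V ℝ} (h : M.PosDef) (A : Finset V) : (psub M A).PosDef := by
  rw [posDef_iff_dotProduct_mulVec]
  constructor
  · ext i j
    have := congrFun (congrFun h.1 (i : V)) (j : V)
    simpa [psub, conjTranspose_apply] using this
  · intro x hx
    have hy : extz A x ≠ 0 := by
      intro h0
      apply hx
      funext a
      have := congrFun h0 a.1
      simpa [extz, a.2] using this
    have hval := h.dotProduct_mulVec_pos hy
    have hmv : ∀ v : V, (M *ᵥ extz A x) v = ∑ a : A, M v a.1 * x a := by
      intro v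
      simp only [mulVec, dotProduct]
      have := sum_extz A x (fun w => M v w)
      calc ∑ w : V, M v w * extz A x w = ∑ w : V, extz A x w * M v w := by
            refine Finset.sum_congr rfl fun w _ => mul_comm _ _
        _ = ∑ a : A, x a * M v a.1 := sum_extz A x _
        _ = ∑ a : A, M v a.1 * x a := Finset.sum_congr rfl fun a _ => mul_comm _ _
    have key : (star (extz A x)) ⬝ᵥ (M *ᵥ extz A x) = (star x) ⬝ᵥ ((psub M A) *ᵥ x) := by
      simp only [star, dotProduct, Pi.star_apply, star_trivial, id_eq]
      rw [show ∀ f : V → ℝ, (∑ v : V, extz A x v * f v) = ∑ a : A, x a * f a.1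
        from fun f => sum_extz A x f]
      refine Finset.sum_congr rfl fun a _ => ?_
      rw [hmv]
      simp [psub, mulVec, dotProduct]
    rwa [key] at hval

/-- Jacobi-type identity for block matrices. -/
lemma jacobi_blocks {l r : Type*} [Fintype l] [Fintype r] [DecidableEq l] [DecidableEq r]
    (A : Matrix l l ℝ) (B : Matrix l r ℝ) (C : Matrix r l ℝ) (D : Matrix r r ℝ)
    [Invertible D] [Invertible (fromBlocks A B C D)] :
    det ((fromBlocks A B C D)⁻¹.toBlocks₁₁) * det (fromBlocks A B C D) = det D := by
  letI := invertibleOfFromBlocks₂₂Invertible A B C D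
  rw [← invOf_eq_nonsing_inv, invOf_fromBlocks₂₂_eq, det_fromBlocks₂₂]
  have h1 : (fromBlocks (⅟ (A - B * ⅟ D * C)) (-(⅟ (A - B * ⅟ D * C) * B * ⅟ D))
      (-(⅟ D * C * ⅟ (A - B * ⅟ D * C))) (⅟ D + ⅟ D * C * ⅟ (A - B * ⅟ D * C) * B * ⅟ D)
      ).toBlocks₁₁ = ⅟ (A - B * ⅟ D * C) := rfl
  rw [h1]
  letI : Invertible (A - B * ⅟ D * C).det := detInvertibleOfInvertible _
  rw [det_invOf]
  rw [show ⅟ (A - B * ⅟ D * C).det * ((D.det) * (A - B * ⅟ D * C).det)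
      = D.det * (⅟ (A - B * ⅟ D * C).det * (A - B * ⅟ D * C).det) by ring,
    invOf_mul_self, mul_one]

/-- equiv between `↥Uᶜ ⊕ ↥U` and `V`. -/
def cEquiv (U : Finset V) : ({x // x ∈ Uᶜ} ⊕ {x // x ∈ U}) ≃ V where
  toFun := Sum.elim (fun a => a.1) (fun a => a.1)
  invFun v := if h : v ∈ U then Sum.inr ⟨v, h⟩ else Sum.inl ⟨v, Finset.mem_compl.2 h⟩
  left_inv := by
    rintro (⟨v, hv⟩ | ⟨v, hv⟩)
    · simp [Finset.mem_compl.1 hv]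
    · simp [hv]
  right_inv v := by by_cases h : v ∈ U <;> simp [h]

lemma key_det (Sg : Matrix V V ℝ) (hpd : Sg.PosDef) (U : Finset V) :
    det (psub Sg U) = det (psub Sg⁻¹ Uᶜ) * det Sg := by
  set e := cEquiv U
  set M := Sg.submatrix e e with hM
  have hdet : det M = det Sg := det_submatrix_equiv_self e Sg
  have hinv : M⁻¹ = Sg⁻¹.submatrix e e := (inv_submatrix_equiv Sg e e).symm ▸ rfl
  have hb22 : M.toBlocks₂₂ = psub Sg U := rfl
  have hb11 : (M⁻¹).toBlocks₁₁ = psub Sg⁻¹ Uᶜ := by rw [hinv]; rfl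
  letI : Invertible Sg := hpd.isUnit.invertible
  letI : Invertible M := by
    apply invertibleOfIsUnitDet
    rw [hdet]
    exact hpd.det_pos.ne'.isUnit
  letI : Invertible M.toBlocks₂₂ := by
    rw [hb22]
    exact (psub_posDef hpd U).isUnit.invertible
  have hfb : fromBlocks M.toBlocks₁₁ M.toBlocks₁₂ M.toBlocks₂₁ M.toBlocks₂₂ = M :=
    fromBlocks_toBlocks M
  letI : Invertible (fromBlocks M.toBlocks₁₁ M.toBlocks₁₂ M.toBlocks₂₁ M.toBlocks₂₂) := by
    rw [hfb]; infer_instance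
  have := jacobi_blocks M.toBlocks₁₁ M.toBlocks₁₂ M.toBlocks₂₁ M.toBlocks₂₂
  rw [hfb, hb11, hb22, hdet] at this
  rw [← this]

/-- equiv between `↥A ⊕ ↥B` and `↥(A ∪ B)` for disjoint finsets. -/
def uEquiv (A B : Finset V) (h : Disjoint A B) : ({x // x ∈ A} ⊕ {x // x ∈ B}) ≃ {x // x ∈ A ∪ B}
    where
  toFun := Sum.elim (fun a => ⟨a.1, Finset.mem_union_left _ a.2⟩)
    (fun b => ⟨b.1, Finset.mem_union_right _ b.2⟩)
  invFun v := if hv : v.1 ∈ A then Sum.inl ⟨v.1, hv⟩ else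
    Sum.inr ⟨v.1, (Finset.mem_union.1 v.2).resolve_left hv⟩
  left_inv := by
    rintro (⟨v, hv⟩ | ⟨v, hv⟩)
    · simp [hv]
    · simp [Finset.disjoint_right.1 h hv]
  right_inv v := by
    by_cases hv : v.1 ∈ A <;> simp [hv]

lemma det_psub_union (K : Matrix V V ℝ) (A B : Finset V) (h : Disjoint A B)
    (h1 : ∀ a ∈ A, ∀ b ∈ B, K a b = 0) (h2 : ∀ b ∈ B, ∀ a ∈ A, K b a = 0) :
    det (psub K (A ∪ B)) = det (psub K A) * det (psub K B) := by
  set e := uEquiv A B h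
  have : (psub K (A ∪ B)).submatrix e e = fromBlocks (psub K A) 0 0 (psub K B) := by
    ext i j
    rcases i with a | a <;> rcases j with b | b
    · rfl
    · exact h1 _ a.2 _ b.2
    · exact h2 _ a.2 _ b.2
    · rfl
  have hd := det_submatrix_equiv_self e (psub K (A ∪ B))
  rw [← hd, this, det_fromBlocks_zero₂₁]

end Aux
/-- If `(A, S, B)` is a partition of `V` with `A`, `B` nonempty and `Σ` is a symmetric
positive definite matrix whose inverse has zero `(A,B)` block, then
`det Σ = det Σ_{A∪S} · det Σ_{B∪S} / det Σ_S` (with `det Σ_∅ = 1`, which is automatic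
for a matrix indexed by the empty type). -/
theorem stmt_0 {V : Type*} [Fintype V] [DecidableEq V]
    (A S B : Finset V) (hA : A.Nonempty) (hB : B.Nonempty)
    (hAS : Disjoint A S) (hAB : Disjoint A B) (hSB : Disjoint S B)
    (hcover : A ∪ S ∪ B = Finset.univ)
    (Sg : Matrix V V ℝ) (hsym : Sg.IsSymm) (hpd : Sg.PosDef)
    (hzero : ∀ a ∈ A, ∀ b ∈ B, Sg⁻¹ a b = 0) :
    Sg.det = (psub Sg (A ∪ S)).det * (psub Sg (B ∪ S)).det / (psub Sg S).det := by
  have hK : Sg⁻¹.PosDef := hpd.inv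
  have htot : ∀ v : V, v ∈ A ∨ v ∈ S ∨ v ∈ B := by
    intro v
    have : v ∈ A ∪ S ∪ B := hcover ▸ Finset.mem_univ v
    simpa [Finset.mem_union, or_assoc] using this
  have hcB : (A ∪ S)ᶜ = B := by
    ext v
    simp only [Finset.mem_compl, Finset.mem_union, not_or]
    constructor
    · rintro ⟨hvA, hvS⟩
      rcases htot v with h | h | h
      · exact absurd h hvA
      · exact absurd h hvS
      · exact h
    · intro hv
      exact ⟨Finset.disjoint_right.1 hAB hv, Finset.disjoint_right.1 hSB hv⟩
  have hcA : (B ∪ S)ᶜ = A := by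
    ext v
    simp only [Finset.mem_compl, Finset.mem_union, not_or]
    constructor
    · rintro ⟨hvB, hvS⟩
      rcases htot v with h | h | h
      · exact h
      · exact absurd h hvS
      · exact absurd h hvB
    · intro hv
      exact ⟨Finset.disjoint_left.1 hAB hv, Finset.disjoint_left.1 hAS hv⟩
  have hcS : Sᶜ = A ∪ B := by
    ext v
    simp only [Finset.mem_compl, Finset.mem_union]
    constructor
    · intro hvS
      rcases htot v with h | h | h
      · exact Or.inl h
      · exact absurd h hvS
      · exact Or.inr h
    · rintro (hv | hv)
      · exact Finset.disjoint_left.1 hAS hv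
      · exact Finset.disjoint_right.1 hSB hv
  have h1 := key_det Sg hpd (A ∪ S); rw [hcB] at h1
  have h2 := key_det Sg hpd (B ∪ S); rw [hcA] at h2
  have h3 := key_det Sg hpd S; rw [hcS] at h3
  have hsymK : ∀ b ∈ B, ∀ a ∈ A, Sg⁻¹ b a = 0 := by
    intro b hb a ha
    have ht : (Sg⁻¹)ᵀ = Sg⁻¹ := by rw [transpose_nonsing_inv, hsym]
    calc Sg⁻¹ b a = (Sg⁻¹)ᵀ a b := rfl
      _ = Sg⁻¹ a b := by rw [ht]
      _ = 0 := hzero a ha b hb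
  have hAB' : det (psub Sg⁻¹ (A ∪ B)) = det (psub Sg⁻¹ A) * det (psub Sg⁻¹ B) :=
    det_psub_union _ A B hAB hzero hsymK
  have pA : (det (psub Sg⁻¹ A)) ≠ 0 := (psub_posDef hK A).det_pos.ne'
  have pB : (det (psub Sg⁻¹ B)) ≠ 0 := (psub_posDef hK B).det_pos.ne'
  have pS : det Sg ≠ 0 := hpd.det_pos.ne'
  rw [h1, h2, h3, hAB']
  rw [eq_div_iff (by positivity : (psub Sg⁻¹ A).det * (psub Sg⁻¹ B).det * Sg.det ≠ 0)]
  ring
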